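/- arXiv:2209.11714 — 2 statements merged into one kernel-verified Lean document; each statement's English description precedes it below -/
import Mathlib

section
/- The Lee–Huang–Yang integral: ∫_0^∞ t²·( √(t⁴+2t²) − t² − 1 + 1/(2t²) ) dt = 8√2/15, where the integrand extends continuously to t=0 with value 1/2 after multiplication by t² (i.e., the improper Riemann integral converges and has this value). -/
open MeasureTheory Real

/-- The antiderivative of the LHY integrand. -/
noncomputable def lhyF (t : ℝ) : ℝ :=
  (Real.sqrt (t ^ 2 + 2)) ^ 5 / 5 - 2 * (Real.sqrt (t ^ 2 + 2)) ^ 3 / 3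
    - t ^ 5 / 5 - t ^ 3 / 3 + t / 2

lemma lhyF_hasDerivAt (x : ℝ) :
    HasDerivAt lhyF (x ^ 3 * Real.sqrt (x ^ 2 + 2) - x ^ 4 - x ^ 2 + 1 / 2) x := by
  have hpos : (0:ℝ) < x ^ 2 + 2 := by positivity
  have hs_pos : 0 < Real.sqrt (x ^ 2 + 2) := Real.sqrt_pos.mpr hpos
  have hs2 : Real.sqrt (x ^ 2 + 2) ^ 2 = x ^ 2 + 2 := Real.sq_sqrt hpos.le
  have h1 : HasDerivAt (fun t : ℝ => t ^ 2 + 2) (2 * x) x := by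
    simpa using ((hasDerivAt_pow 2 x).add_const 2)
  have h2 : HasDerivAt (fun t : ℝ => Real.sqrt (t ^ 2 + 2))
      (1 / (2 * Real.sqrt (x ^ 2 + 2)) * (2 * x)) x :=
    (Real.hasDerivAt_sqrt hpos.ne').comp x h1
  have h5 : HasDerivAt (fun t : ℝ => (Real.sqrt (t ^ 2 + 2)) ^ 5)
      (5 * (Real.sqrt (x ^ 2 + 2)) ^ 4 * (1 / (2 * Real.sqrt (x ^ 2 + 2)) * (2 * x))) x := by
    simpa using (h2.fun_pow 5)
  have h3 : HasDerivAt (fun t : ℝ => (Real.sqrt (t ^ 2 + 2)) ^ 3)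
      (3 * (Real.sqrt (x ^ 2 + 2)) ^ 2 * (1 / (2 * Real.sqrt (x ^ 2 + 2)) * (2 * x))) x := by
    simpa using (h2.fun_pow 3)
  have hx5 : HasDerivAt (fun t : ℝ => t ^ 5) (5 * x ^ 4) x := by
    simpa using hasDerivAt_pow 5 x
  have hx3 : HasDerivAt (fun t : ℝ => t ^ 3) (3 * x ^ 2) x := by
    simpa using hasDerivAt_pow 3 x
  have hD := (((((h5.div_const 5).sub ((h3.const_mul 2).div_const 3)).sub
      (hx5.div_const 5)).sub (hx3.div_const 3)).add ((hasDerivAt_id x).div_const 2))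
  have hfun : lhyF = fun t : ℝ => (Real.sqrt (t ^ 2 + 2)) ^ 5 / 5
      - 2 * (Real.sqrt (t ^ 2 + 2)) ^ 3 / 3 - t ^ 5 / 5 - t ^ 3 / 3 + t / 2 := rfl
  rw [hfun]
  refine hD.congr_deriv ?_
  symm
  have hsne : Real.sqrt (x ^ 2 + 2) ≠ 0 := hs_pos.ne'
  have h4 : Real.sqrt (x ^ 2 + 2) ^ 4 = (x ^ 2 + 2) ^ 2 := by
    rw [show Real.sqrt (x ^ 2 + 2) ^ 4 = (Real.sqrt (x ^ 2 + 2) ^ 2) ^ 2 by ring, hs2]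
  rw [h4, hs2]
  field_simp
  linear_combination (2*x^3) * hs2

lemma lhyF_bound {t : ℝ} (ht : 2 ≤ t) : |lhyF t| ≤ 2 / t := by
  have ht0 : (0:ℝ) < t := by linarith
  set s := Real.sqrt (t ^ 2 + 2) with hs_def
  have hpos : (0:ℝ) < t ^ 2 + 2 := by positivity
  have hs2 : s ^ 2 = t ^ 2 + 2 := Real.sq_sqrt hpos.le
  have hs_pos : 0 < s := Real.sqrt_pos.mpr hpos
  have hst : t ≤ s := by nlinarith [hs2, hs_pos]
  have hst2 : s ≤ t + 1 := by nlinarith [hs2, hs_pos]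
  have ht2 : (4:ℝ) ≤ t ^ 2 := by nlinarith
  have h16 : (16:ℝ) ≤ t ^ 4 := by nlinarith
  set D : ℝ := (s + t) * ((3*t^4 + (7/2)*t^2 - 16) + (3*t^3 + (1/2)*t) * s) with hD_def
  -- the key rational identity
  have hA : (3*s^5 - 10*s^3 - 3*t^5 - 5*t^3 + (15/2)*t) * D
      = 256 - (225/2)*t^2 - 90*t^4 := by
    rw [hD_def]
    linear_combination (128 - (241/4)*t^2 - 68*t^4 + (15/2)*t^6 + 9*t^8 + 60*s*t
      - 85*s*t^3 + 6*s*t^5 + 18*s*t^7 + 64*s^2 - 64*s^2*t^2 - 12*s^2*t^4 + 18*s^2*t^6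
      - 50*s^3*t + 18*s^3*t^5 - 48*s^4 + 12*s^4*t^2 + 18*s^4*t^4 + (3/2)*s^5*t
      + 9*s^5*t^3) * hs2
  have hF15 : lhyF t = (3*s^5 - 10*s^3 - 3*t^5 - 5*t^3 + (15/2)*t) / 15 := by
    simp only [lhyF, ← hs_def]
    ring
  have hf2 : 5*t^4 ≤ (3*t^4 + (7/2)*t^2 - 16) + (3*t^3 + (1/2)*t) * s := by
    have hm : (3*t^3 + (1/2)*t) * t ≤ (3*t^3 + (1/2)*t) * s :=
      mul_le_mul_of_nonneg_left hst (by positivity)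
    nlinarith [hm]
  have hD_lb : 10 * t ^ 5 ≤ D := by
    have hmul : (2*t) * (5*t^4) ≤ (s + t) * ((3*t^4 + (7/2)*t^2 - 16) + (3*t^3 + (1/2)*t) * s) :=
      mul_le_mul (by linarith) hf2 (by positivity) (by linarith)
    calc 10 * t ^ 5 = (2*t) * (5*t^4) := by ring
    _ ≤ D := by rw [hD_def]; exact hmul
  have hD_pos : 0 < D := lt_of_lt_of_le (by positivity) hD_lb
  have hFD : lhyF t = (256 - (225/2)*t^2 - 90*t^4) / (15 * D) := by
    rw [eq_div_iff (by positivity), hF15, div_mul_eq_mul_div]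
    rw [show (3*s^5 - 10*s^3 - 3*t^5 - 5*t^3 + (15/2)*t) * (15 * D)
      = ((3*s^5 - 10*s^3 - 3*t^5 - 5*t^3 + (15/2)*t) * D) * 15 by ring, hA]
    ring
  rw [abs_le, hFD]
  constructor
  · rw [show -(2/t) = (-2)/t by ring, div_le_div_iff₀ ht0 (by positivity)]
    nlinarith [hD_lb, mul_pos ht0 (pow_pos ht0 4),
      mul_le_mul_of_nonneg_left hD_lb (le_of_lt ht0), pow_pos ht0 3, pow_pos ht0 5]
  · have hRneg : (256 - (225/2)*t^2 - 90*t^4) / (15 * D) ≤ 0 := by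
      apply div_nonpos_of_nonpos_of_nonneg
      · nlinarith
      · positivity
    have : (0:ℝ) ≤ 2 / t := by positivity
    linarith

lemma lhyF_tendsto : Filter.Tendsto lhyF Filter.atTop (nhds 0) := by
  have hpos : Filter.Tendsto (fun t : ℝ => 2 / t) Filter.atTop (nhds 0) :=
    Filter.Tendsto.div_atTop tendsto_const_nhds Filter.tendsto_id
  have hneg : Filter.Tendsto (fun t : ℝ => -(2 / t)) Filter.atTop (nhds 0) := by
    simpa using hpos.neg
  apply tendsto_of_tendsto_of_tendsto_of_le_of_le' hneg hpos
  · filter_upwards [Filter.eventually_ge_atTop (2:ℝ)] with t ht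
    exact neg_le_of_abs_le (lhyF_bound ht)
  · filter_upwards [Filter.eventually_ge_atTop (2:ℝ)] with t ht
    exact le_of_abs_le (lhyF_bound ht)

lemma lhyF_nonneg_deriv {x : ℝ} (hx : 0 < x) :
    0 ≤ x ^ 3 * Real.sqrt (x ^ 2 + 2) - x ^ 4 - x ^ 2 + 1 / 2 := by
  have hpos : (0:ℝ) < x ^ 2 + 2 := by positivity
  set s := Real.sqrt (x ^ 2 + 2) with hs_def
  have hs2 : s ^ 2 = x ^ 2 + 2 := Real.sq_sqrt hpos.le
  have hs_pos : 0 < s := Real.sqrt_pos.mpr hpos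
  rcases le_or_gt (x ^ 4 + x ^ 2 - 1/2) 0 with h | h
  · nlinarith [mul_pos (mul_pos (mul_pos hx hx) hx) hs_pos]
  · have key : (x^3 * s)^2 - (x^4 + x^2 - 1/2)^2 = x^2 - 1/4 := by
      nlinarith [hs2]
    have hx2 : 1/4 < x ^ 2 := by nlinarith
    have hxs : 0 < x^3 * s := by positivity
    nlinarith [key, hxs, h]

/-- **The Lee–Huang–Yang integral.** The dimensionless integral arising from
Bogoliubov's formula after the substitution `p = √c · t`:
`∫₀^∞ t²(√(t⁴+2t²) − t² − 1 + 1/(2t²)) dt = 8√2/15`. -/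
theorem lhy_integral :
    ∫ t in Set.Ioi (0 : ℝ),
        t ^ 2 * (Real.sqrt (t ^ 4 + 2 * t ^ 2) - t ^ 2 - 1 + 1 / (2 * t ^ 2))
      = 8 * Real.sqrt 2 / 15 := by
  have hcongr : Set.EqOn
      (fun t : ℝ => t ^ 2 * (Real.sqrt (t ^ 4 + 2 * t ^ 2) - t ^ 2 - 1 + 1 / (2 * t ^ 2)))
      (fun t : ℝ => t ^ 3 * Real.sqrt (t ^ 2 + 2) - t ^ 4 - t ^ 2 + 1 / 2)
      (Set.Ioi 0) := by
    intro t ht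
    have ht0 : (0:ℝ) < t := ht
    have h1 : Real.sqrt (t ^ 4 + 2 * t ^ 2) = t * Real.sqrt (t ^ 2 + 2) := by
      rw [show t ^ 4 + 2 * t ^ 2 = t ^ 2 * (t ^ 2 + 2) by ring, Real.sqrt_mul (by positivity),
        Real.sqrt_sq ht0.le]
    simp only [h1]
    field_simp
  rw [setIntegral_congr_fun measurableSet_Ioi hcongr]
  have hcont : ContinuousWithinAt lhyF (Set.Ici 0) 0 := by
    apply Continuous.continuousWithinAt
    unfold lhyF
    fun_prop
  have hkey := integral_Ioi_of_hasDerivAt_of_nonneg (g := lhyF)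
      (g' := fun t => t ^ 3 * Real.sqrt (t ^ 2 + 2) - t ^ 4 - t ^ 2 + 1 / 2)
      hcont (fun x _ => lhyF_hasDerivAt x) (fun x hx => lhyF_nonneg_deriv hx) lhyF_tendsto
  rw [hkey]
  have h2 : Real.sqrt ((0:ℝ) ^ 2 + 2) = Real.sqrt 2 := by norm_num
  have hs2 : Real.sqrt 2 ^ 2 = 2 := Real.sq_sqrt (by norm_num)
  have e5 : Real.sqrt 2 ^ 5 = 4 * Real.sqrt 2 := by
    rw [show Real.sqrt 2 ^ 5 = (Real.sqrt 2 ^ 2) ^ 2 * Real.sqrt 2 by ring, hs2]; norm_num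
  have e3 : Real.sqrt 2 ^ 3 = 2 * Real.sqrt 2 := by
    rw [show Real.sqrt 2 ^ 3 = Real.sqrt 2 ^ 2 * Real.sqrt 2 by ring, hs2]
  simp only [lhyF, h2, e5, e3]
  ring
end

section
/- Integral identity for the zero-energy scattering solution in 3d: Let R>0, let V:ℝ³→[0,∞) be continuous with supp V ⊂ {x : |x|≤R}, let a∈ℝ, and let f∈C²(ℝ³) satisfy Δf(x) = ½V(x)f(x) for all x∈ℝ³ and f(x) = 1 − a/|x| for all |x|≥R. Then ∫_{ℝ³} V(x)f(x) dx = 8πa. -/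
open MeasureTheory Filter Real

noncomputable section

abbrev Vec3 := Fin 3 → ℝ

/-- The Euclidean norm of a point of `ℝ³`. -/
def enorm3 (x : Vec3) : ℝ := Real.sqrt (∑ k, (x k) ^ 2)

/-- The Laplacian `Δg(x) = ∑ₖ ∂ₖ∂ₖ g(x)`. -/
def laplacian3 (g : Vec3 → ℝ) (x : Vec3) : ℝ :=
  ∑ k : Fin 3, fderiv ℝ (fun y => fderiv ℝ g y (Pi.single k 1)) x (Pi.single k 1)

theorem abs_le_enorm3 (x : Vec3) (i : Fin 3) : |x i| ≤ enorm3 x := by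
  rw [← Real.sqrt_sq_eq_abs]
  apply Real.sqrt_le_sqrt
  exact Finset.single_le_sum (f := fun k => x k ^ 2) (fun k _ => sq_nonneg _) (Finset.mem_univ i)

theorem sqrt_q_deriv (c : ℝ) (hc : 0 < c) (u : ℝ) :
    HasDerivAt (fun u : ℝ => Real.sqrt (c + u ^ 2)) (u / Real.sqrt (c + u ^ 2)) u := by
  have hq : 0 < c + u ^ 2 := by positivity
  have hq' : HasDerivAt (fun u : ℝ => c + u ^ 2) (2 * u) u := by
    simpa using (hasDerivAt_pow 2 u).const_add c
  have h := (Real.hasDerivAt_sqrt hq.ne').comp u hq'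
  refine h.congr_deriv (Eq.symm ?_)
  have hs : 0 < Real.sqrt (c + u ^ 2) := Real.sqrt_pos.2 hq
  field_simp

theorem enorm3_fderiv (x : Vec3) (hx : 0 < ∑ k, x k ^ 2) :
    HasFDerivAt enorm3 ((1 / (2 * enorm3 x)) •
      (∑ k, (2 * x k) • ContinuousLinearMap.proj (R := ℝ) (φ := fun _ : Fin 3 => ℝ) k)) x := by
  have hsum : HasFDerivAt (fun y : Vec3 => ∑ k, y k ^ 2)
      (∑ k, (2 * x k) • ContinuousLinearMap.proj (R := ℝ) (φ := fun _ : Fin 3 => ℝ) k) x := by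
    apply HasFDerivAt.fun_sum
    intro k _
    have h := (ContinuousLinearMap.proj (R := ℝ) (φ := fun _ : Fin 3 => ℝ) k).hasFDerivAt (x := x)
    have h2 := h.mul h
    simp only [ContinuousLinearMap.proj_apply] at h2
    simp only [pow_two, two_mul, add_smul]
    exact h2
  exact (Real.hasDerivAt_sqrt hx.ne').comp_hasFDerivAt x hsum

theorem ext_fderiv (a : ℝ) (x : Vec3) (hx : 0 < ∑ k, x k ^ 2) (i : Fin 3) :
    fderiv ℝ (fun y => 1 - a / enorm3 y) x (Pi.single i 1) = a * x i / enorm3 x ^ 3 := by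
  have hs0 : 0 < enorm3 x := Real.sqrt_pos.2 hx
  have hsq : enorm3 x ^ 2 = ∑ k, x k ^ 2 := Real.sq_sqrt hx.le
  have hh : HasDerivAt (fun t : ℝ => 1 - a * t⁻¹) (a / enorm3 x ^ 2) (enorm3 x) := by
    have := ((hasDerivAt_inv hs0.ne').const_mul a).const_sub 1
    refine this.congr_deriv (Eq.symm ?_)
    field_simp
  have hg : HasFDerivAt (fun y => 1 - a / enorm3 y)
      ((a / enorm3 x ^ 2) • ((1 / (2 * enorm3 x)) •
        (∑ k, (2 * x k) • ContinuousLinearMap.proj (R := ℝ) (φ := fun _ : Fin 3 => ℝ) k))) x := by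
    have := hh.comp_hasFDerivAt x (enorm3_fderiv x hx)
    simpa only [div_eq_mul_inv, Function.comp_def] using this
  rw [hg.fderiv]
  simp only [ContinuousLinearMap.smul_apply, ContinuousLinearMap.sum_apply,
    ContinuousLinearMap.proj_apply, smul_eq_mul]
  have h2 : ∑ k, (2 * x k) * (Pi.single i 1 : Vec3) k = 2 * x i := by
    simp [Pi.single_apply, mul_ite, Finset.sum_ite_eq']
  rw [h2]
  field_simp

theorem inner_integral (a L v : ℝ) (hL : 0 < L) :
    ∫ u in (-L)..L, a * L / Real.sqrt (L ^ 2 + v ^ 2 + u ^ 2) ^ 3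
      = 2 * a * L ^ 2 / ((L ^ 2 + v ^ 2) * Real.sqrt (L ^ 2 + v ^ 2 + L ^ 2)) := by
  have hk : 0 < L ^ 2 + v ^ 2 := by positivity
  have hder : ∀ u ∈ Set.uIcc (-L) L, HasDerivAt
      (fun u => a * L * u / ((L ^ 2 + v ^ 2) * Real.sqrt (L ^ 2 + v ^ 2 + u ^ 2)))
      (a * L / Real.sqrt (L ^ 2 + v ^ 2 + u ^ 2) ^ 3) u := by
    intro u _
    have hq : 0 < L ^ 2 + v ^ 2 + u ^ 2 := by positivity
    have hs : 0 < Real.sqrt (L ^ 2 + v ^ 2 + u ^ 2) := Real.sqrt_pos.2 hq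
    have hsq : Real.sqrt (L ^ 2 + v ^ 2 + u ^ 2) ^ 2 = L ^ 2 + v ^ 2 + u ^ 2 :=
      Real.sq_sqrt hq.le
    have hN : HasDerivAt (fun u : ℝ => a * L * u) (a * L) u := by
      simpa using (hasDerivAt_id u).const_mul (a * L)
    have hD : HasDerivAt (fun u : ℝ => (L ^ 2 + v ^ 2) * Real.sqrt (L ^ 2 + v ^ 2 + u ^ 2))
        ((L ^ 2 + v ^ 2) * (u / Real.sqrt (L ^ 2 + v ^ 2 + u ^ 2))) u :=
      (sqrt_q_deriv _ hk u).const_mul _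
    have hD0 : (L ^ 2 + v ^ 2) * Real.sqrt (L ^ 2 + v ^ 2 + u ^ 2) ≠ 0 := by positivity
    have h := hN.div hD hD0
    refine h.congr_deriv (Eq.symm ?_)
    field_simp
    linear_combination (-a) * hsq
  have hcont : IntervalIntegrable
      (fun u => a * L / Real.sqrt (L ^ 2 + v ^ 2 + u ^ 2) ^ 3) volume (-L) L := by
    apply Continuous.intervalIntegrable
    apply continuous_const.div
    · fun_prop
    · intro u
      have hq : 0 < L ^ 2 + v ^ 2 + u ^ 2 := by positivity
      positivity
  rw [intervalIntegral.integral_eq_sub_of_hasDerivAt hder hcont]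
  have : L ^ 2 + v ^ 2 + (-L) ^ 2 = L ^ 2 + v ^ 2 + L ^ 2 := by ring
  rw [this]
  field_simp
  ring

theorem outer_integral (a L : ℝ) (hL : 0 < L) :
    ∫ v in (-L)..L, 2 * a * L ^ 2 / ((L ^ 2 + v ^ 2) * Real.sqrt (L ^ 2 + v ^ 2 + L ^ 2))
      = 2 * π * a / 3 := by
  have hder : ∀ v ∈ Set.uIcc (-L) L, HasDerivAt
      (fun v => 2 * a * Real.arctan (v / Real.sqrt (L ^ 2 + v ^ 2 + L ^ 2)))
      (2 * a * L ^ 2 / ((L ^ 2 + v ^ 2) * Real.sqrt (L ^ 2 + v ^ 2 + L ^ 2))) v := by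
    intro v _
    have hq : 0 < L ^ 2 + v ^ 2 + L ^ 2 := by positivity
    have hs : 0 < Real.sqrt (L ^ 2 + v ^ 2 + L ^ 2) := Real.sqrt_pos.2 hq
    have hsq : Real.sqrt (L ^ 2 + v ^ 2 + L ^ 2) ^ 2 = L ^ 2 + v ^ 2 + L ^ 2 :=
      Real.sq_sqrt hq.le
    have hQ : HasDerivAt (fun v : ℝ => Real.sqrt (L ^ 2 + v ^ 2 + L ^ 2))
        (v / Real.sqrt (L ^ 2 + v ^ 2 + L ^ 2)) v := by
      have h0 : 0 < L ^ 2 + L ^ 2 := by positivity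
      have := sqrt_q_deriv (L ^ 2 + L ^ 2) h0 v
      have he : ∀ w : ℝ, L ^ 2 + L ^ 2 + w ^ 2 = L ^ 2 + w ^ 2 + L ^ 2 := by intro w; ring
      simpa only [he] using this
    have hw : HasDerivAt (fun v : ℝ => v / Real.sqrt (L ^ 2 + v ^ 2 + L ^ 2))
        ((1 * Real.sqrt (L ^ 2 + v ^ 2 + L ^ 2) - v * (v / Real.sqrt (L ^ 2 + v ^ 2 + L ^ 2)))
          / Real.sqrt (L ^ 2 + v ^ 2 + L ^ 2) ^ 2) v :=
      (hasDerivAt_id v).div hQ hs.ne'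
    have h := (hw.arctan).const_mul (2 * a)
    refine h.congr_deriv (Eq.symm ?_)
    field_simp
    linear_combination (-a*v^2) * hsq
  have hcont : IntervalIntegrable
      (fun v => 2 * a * L ^ 2 / ((L ^ 2 + v ^ 2) * Real.sqrt (L ^ 2 + v ^ 2 + L ^ 2)))
      volume (-L) L := by
    apply Continuous.intervalIntegrable
    apply continuous_const.div
    · fun_prop
    · intro v
      have hq : 0 < L ^ 2 + v ^ 2 + L ^ 2 := by positivity
      have hs : 0 < Real.sqrt (L ^ 2 + v ^ 2 + L ^ 2) := Real.sqrt_pos.2 hq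
      positivity
  rw [intervalIntegral.integral_eq_sub_of_hasDerivAt hder hcont]
  have h3 : Real.sqrt (L ^ 2 + L ^ 2 + L ^ 2) = Real.sqrt 3 * L := by
    rw [show L ^ 2 + L ^ 2 + L ^ 2 = 3 * L ^ 2 by ring, Real.sqrt_mul (by norm_num),
      Real.sqrt_sq hL.le]
  have h4 : Real.sqrt (L ^ 2 + (-L) ^ 2 + L ^ 2) = Real.sqrt 3 * L := by
    rw [show L ^ 2 + (-L) ^ 2 + L ^ 2 = 3 * L ^ 2 by ring, Real.sqrt_mul (by norm_num),
      Real.sqrt_sq hL.le]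
  rw [h3, h4]
  have hs3 : (0:ℝ) < Real.sqrt 3 := by positivity
  have harg : L / (Real.sqrt 3 * L) = 1 / Real.sqrt 3 := by field_simp
  have harg' : -L / (Real.sqrt 3 * L) = -(1 / Real.sqrt 3) := by field_simp
  rw [harg, harg', Real.arctan_neg]
  have : Real.arctan (1 / Real.sqrt 3) = π / 6 := by
    rw [← Real.tan_pi_div_six, Real.arctan_tan] <;> linarith [Real.pi_pos]
  rw [this]
  ring

theorem face_int (a L : ℝ) (hL : 0 < L) :
    ∫ x in Set.Icc (fun _ : Fin 2 => -L) (fun _ : Fin 2 => L),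
      a * L / Real.sqrt (L ^ 2 + x 0 ^ 2 + x 1 ^ 2) ^ 3 = 2 * π * a / 3 := by
  have hLL : (-L : ℝ) ≤ L := by linarith
  have hcont : Continuous (fun p : ℝ × ℝ => a * L / Real.sqrt (L ^ 2 + p.1 ^ 2 + p.2 ^ 2) ^ 3) := by
    apply continuous_const.div
    · fun_prop
    · intro p
      have hq : 0 < L ^ 2 + p.1 ^ 2 + p.2 ^ 2 := by positivity
      have := Real.sqrt_pos.2 hq
      positivity
  have e := (MeasureTheory.volume_preserving_finTwoArrow ℝ)
  have hset : Set.Icc (fun _ : Fin 2 => -L) (fun _ : Fin 2 => L)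
      = (MeasurableEquiv.finTwoArrow (α := ℝ)) ⁻¹' (Set.Icc (-L) L ×ˢ Set.Icc (-L) L) := by
    ext x
    simp [Set.mem_Icc, Pi.le_def, Fin.forall_fin_two, MeasurableEquiv.finTwoArrow,
      Set.mem_prod]
  have htrans := e.setIntegral_preimage_emb
    (MeasurableEquiv.finTwoArrow (α := ℝ)).measurableEmbedding
    (fun p : ℝ × ℝ => a * L / Real.sqrt (L ^ 2 + p.1 ^ 2 + p.2 ^ 2) ^ 3)
    (Set.Icc (-L) L ×ˢ Set.Icc (-L) L)
  rw [hset]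
  rw [show (fun x : Fin 2 → ℝ => a * L / Real.sqrt (L ^ 2 + x 0 ^ 2 + x 1 ^ 2) ^ 3)
      = fun x : Fin 2 → ℝ => a * L / Real.sqrt (L ^ 2 + (MeasurableEquiv.finTwoArrow x).1 ^ 2
        + (MeasurableEquiv.finTwoArrow x).2 ^ 2) ^ 3 from rfl] at *
  rw [htrans]
  have hint : IntegrableOn (fun p : ℝ × ℝ => a * L / Real.sqrt (L ^ 2 + p.1 ^ 2 + p.2 ^ 2) ^ 3)
      (Set.Icc (-L) L ×ˢ Set.Icc (-L) L) volume :=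
    hcont.continuousOn.integrableOn_compact (IsCompact.prod isCompact_Icc isCompact_Icc)
  rw [MeasureTheory.Measure.volume_eq_prod, MeasureTheory.setIntegral_prod _ hint]
  have inner_eq : ∀ v ∈ Set.Icc (-L) L,
      (∫ u in Set.Icc (-L) L, a * L / Real.sqrt (L ^ 2 + v ^ 2 + u ^ 2) ^ 3)
        = 2 * a * L ^ 2 / ((L ^ 2 + v ^ 2) * Real.sqrt (L ^ 2 + v ^ 2 + L ^ 2)) := by
    intro v _
    rw [MeasureTheory.integral_Icc_eq_integral_Ioc, ← intervalIntegral.integral_of_le hLL]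
    exact inner_integral a L v hL
  calc ∫ v in Set.Icc (-L) L, ∫ u in Set.Icc (-L) L,
        a * L / Real.sqrt (L ^ 2 + v ^ 2 + u ^ 2) ^ 3
      = ∫ v in Set.Icc (-L) L,
          2 * a * L ^ 2 / ((L ^ 2 + v ^ 2) * Real.sqrt (L ^ 2 + v ^ 2 + L ^ 2)) :=
        MeasureTheory.setIntegral_congr_fun measurableSet_Icc inner_eq
    _ = 2 * π * a / 3 := by
        rw [MeasureTheory.integral_Icc_eq_integral_Ioc, ← intervalIntegral.integral_of_le hLL]
        exact outer_integral a L hL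

/-- **Integral identity for the zero-energy scattering solution in 3d.** If
`f ∈ C²(ℝ³)` solves `Δf = ½Vf` with `f(x) = 1 − a/|x|` for `|x| ≥ R` and `V ≥ 0`
is continuous with support in the ball of radius `R`, then `∫ V f = 8πa`. -/
theorem scattering_integral_identity
    (R : ℝ) (hR : 0 < R)
    (V : Vec3 → ℝ) (hVcont : Continuous V) (hVpos : ∀ x, 0 ≤ V x)
    (hVsupp : ∀ x : Vec3, V x ≠ 0 → enorm3 x ≤ R)
    (a : ℝ) (f : Vec3 → ℝ) (hf : ContDiff ℝ 2 f)
    (hscatt : ∀ x : Vec3, laplacian3 f x = (1 / 2) * V x * f x)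
    (hext : ∀ x : Vec3, R ≤ enorm3 x → f x = 1 - a / enorm3 x) :
    ∫ x : Vec3, V x * f x = 8 * π * a := by
  set L : ℝ := 2 * R with hLdef
  have hL : 0 < L := by positivity
  set lo : Vec3 := fun _ => -L with hlodef
  set hi : Vec3 := fun _ => L with hhidef
  have hle : lo ≤ hi := fun i => by simp only [hlodef, hhidef]; linarith
  -- C¹ partial derivatives
  have hFiC1 : ∀ i : Fin 3, ContDiff ℝ 1 (fun x => fderiv ℝ f x (Pi.single i 1)) := by
    intro i
    exact (hf.fderiv_right (by norm_num)).clm_apply contDiff_const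
  -- exterior value of the partial derivatives
  have hFext : ∀ (y : Vec3), R < enorm3 y → ∀ i,
      fderiv ℝ f y (Pi.single i 1) = a * y i / enorm3 y ^ 3 := by
    intro y hy i
    have hUopen : IsOpen {z : Vec3 | R < enorm3 z} := by
      apply isOpen_lt continuous_const
      unfold enorm3; fun_prop
    have hev : f =ᶠ[nhds y] fun z => 1 - a / enorm3 z := by
      filter_upwards [hUopen.mem_nhds hy] with z hz
      exact hext z (le_of_lt hz)
    rw [hev.fderiv_eq]
    have h0 : 0 < enorm3 y := lt_trans hR hy
    exact ext_fderiv a y (Real.sqrt_pos.1 h0) i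
  -- divergence theorem
  have Hd : ∀ x ∈ (Set.pi Set.univ fun i => Set.Ioo (lo i) (hi i)) \ (∅ : Set Vec3), ∀ i : Fin 3,
      HasFDerivAt (fun x => fderiv ℝ f x (Pi.single i 1))
        (fderiv ℝ (fun y => fderiv ℝ f y (Pi.single i 1)) x) x := by
    intro x _ i
    exact (((hFiC1 i).differentiable one_ne_zero) x).hasFDerivAt
  have Hi : IntegrableOn
      (fun x => ∑ i : Fin 3, fderiv ℝ (fun y => fderiv ℝ f y (Pi.single i 1)) x (Pi.single i 1))
      (Set.Icc lo hi) volume := by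
    have hcont : Continuous (fun x =>
        ∑ i : Fin 3, fderiv ℝ (fun y => fderiv ℝ f y (Pi.single i 1)) x (Pi.single i 1)) := by
      apply continuous_finset_sum
      intro i _
      exact ((hFiC1 i).continuous_fderiv one_ne_zero).clm_apply continuous_const
    exact hcont.continuousOn.integrableOn_compact isCompact_Icc
  have hdiv := MeasureTheory.integral_divergence_of_hasFDerivAt_off_countable' (n := 2)
    lo hi hle (fun i x => fderiv ℝ f x (Pi.single i 1))
    (fun i x => fderiv ℝ (fun y => fderiv ℝ f y (Pi.single i 1)) x)
    ∅ Set.countable_empty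
    (fun i => ((hFiC1 i).continuous).continuousOn) Hd Hi
  -- face values
  have hyval : ∀ (i : Fin 3) (c : ℝ) (x : Fin 2 → ℝ), R < |c| →
      fderiv ℝ f (i.insertNth c x) (Pi.single i 1)
        = a * c / Real.sqrt (c ^ 2 + x 0 ^ 2 + x 1 ^ 2) ^ 3 := by
    intro i c x hc
    set y : Vec3 := i.insertNth c x with hydef
    have hsum : ∑ k, y k ^ 2 = c ^ 2 + x 0 ^ 2 + x 1 ^ 2 := by
      rw [Fin.sum_univ_succAbove (fun k => y k ^ 2) i]
      simp only [hydef, Fin.insertNth_apply_same, Fin.insertNth_apply_succAbove]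
      rw [Fin.sum_univ_two]
      ring
    have hen : enorm3 y = Real.sqrt (c ^ 2 + x 0 ^ 2 + x 1 ^ 2) := by
      rw [enorm3, hsum]
    have hRy : R < enorm3 y := by
      calc R < |c| := hc
        _ = Real.sqrt (c ^ 2) := (Real.sqrt_sq_eq_abs c).symm
        _ ≤ enorm3 y := by
            rw [hen]
            apply Real.sqrt_le_sqrt
            nlinarith [sq_nonneg (x 0), sq_nonneg (x 1)]
    rw [hFext y hRy i, hen, hydef, Fin.insertNth_apply_same]
  have hfacetop : ∀ i : Fin 3,
      (∫ x in Set.Icc (lo ∘ i.succAbove) (hi ∘ i.succAbove),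
        fderiv ℝ f (i.insertNth (hi i) x) (Pi.single i 1)) = 2 * π * a / 3 := by
    intro i
    have hs : Set.Icc (lo ∘ i.succAbove) (hi ∘ i.succAbove)
        = Set.Icc (fun _ : Fin 2 => -L) (fun _ : Fin 2 => L) := rfl
    rw [hs, ← face_int a L hL]
    apply MeasureTheory.setIntegral_congr_fun measurableSet_Icc
    intro x _
    have := hyval i L x (by rw [abs_of_pos hL]; simpa [hLdef] using by linarith)
    simpa [hhidef] using this
  have hfacebot : ∀ i : Fin 3,
      (∫ x in Set.Icc (lo ∘ i.succAbove) (hi ∘ i.succAbove),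
        fderiv ℝ f (i.insertNth (lo i) x) (Pi.single i 1)) = 2 * π * (-a) / 3 := by
    intro i
    have hs : Set.Icc (lo ∘ i.succAbove) (hi ∘ i.succAbove)
        = Set.Icc (fun _ : Fin 2 => -L) (fun _ : Fin 2 => L) := rfl
    rw [hs, ← face_int (-a) L hL]
    apply MeasureTheory.setIntegral_congr_fun measurableSet_Icc
    intro x _
    have := hyval i (-L) x (by rw [abs_neg, abs_of_pos hL]; linarith)
    simp only [hlodef] at this ⊢
    rw [this]
    rw [show (-L) ^ 2 = L ^ 2 by ring]
    ring
  -- the divergence integral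
  have hlap : (∫ x in Set.Icc lo hi, laplacian3 f x) = 4 * π * a := by
    have h1 : (∫ x in Set.Icc lo hi, laplacian3 f x)
        = ∫ x in Set.Icc lo hi,
            ∑ i : Fin 3, fderiv ℝ (fun y => fderiv ℝ f y (Pi.single i 1)) x (Pi.single i 1) := rfl
    rw [h1, hdiv]
    rw [Finset.sum_congr rfl (fun i _ => by rw [hfacetop i, hfacebot i])]
    simp [Finset.sum_const]
    ring
  -- reduce the full-space integral to the box
  have hzero : ∀ x : Vec3, x ∉ Set.Icc lo hi → V x * f x = 0 := by
    intro x hx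
    rcases eq_or_ne (V x) 0 with h | h
    · rw [h, zero_mul]
    · exfalso
      have hxR : enorm3 x ≤ R := hVsupp x h
      have : ∃ i, ¬(lo i ≤ x i ∧ x i ≤ hi i) := by
        by_contra hall
        push_neg at hall
        exact hx ⟨fun i => (hall i).1, fun i => (hall i).2⟩
      obtain ⟨i, hi'⟩ := this
      have habs : L < |x i| := by
        rcases not_and_or.1 hi' with h' | h' <;> push_neg at h'
        · simp only [hlodef] at h'
          rw [lt_abs]; right; linarith
        · simp only [hhidef] at h'
          rw [lt_abs]; left; linarith
      have := abs_le_enorm3 x i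
      simp only [hLdef] at habs
      linarith
  have hfull : (∫ x : Vec3, V x * f x) = ∫ x in Set.Icc lo hi, V x * f x :=
    (MeasureTheory.setIntegral_eq_integral_of_forall_compl_eq_zero hzero).symm
  have hVlap : (∫ x in Set.Icc lo hi, V x * f x)
      = ∫ x in Set.Icc lo hi, 2 * laplacian3 f x := by
    apply MeasureTheory.setIntegral_congr_fun measurableSet_Icc
    intro x _
    show V x * f x = 2 * laplacian3 f x
    rw [hscatt x]; ring
  rw [hfull, hVlap, MeasureTheory.integral_const_mul, hlap]
  ring
end
end
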